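/- Let L₁,…,L_K be closed subspaces of a real Hilbert space H such that L₁^⊥ + ⋯ + L_K^⊥ ≠ H. Then ρ(D_L) := inf_{‖x‖=1} sup{ |⟨x,g⟩| : g a unit vector in some Lⱼ^⊥ } = 0. -/

import Mathlib

open Filter Topology RealInnerProductSpace

set_option synthInstance.maxHeartbeats 1000000
set_option maxHeartbeats 1000000

private lemma aux_decomp {H : Type*} [NormedAddCommGroup H] [InnerProductSpace ℝ H]
    [CompleteSpace H] {K : ℕ} (L : Fin K → Submodule ℝ H) [Nonempty (Fin K)]
    {c : ℝ} (hc0 : 0 < c) (hc1 : c ≤ 1)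
    (hP : ∀ z : H, ∃ j, (c/2) * ‖z‖ ≤ ‖(Submodule.orthogonalProjection (L j)ᗮ z : H)‖)
    (y : H) : ∃ f : Fin K → H, (∀ j, f j ∈ (L j)ᗮ) ∧ y = ∑ j, f j := by
  choose J hJ using hP
  let seq : ℕ → H := fun n =>
    Nat.rec y (fun _ z => z - (Submodule.orthogonalProjection (L (J z))ᗮ z : H)) n
  have hseqS : ∀ n, seq (n+1) = seq n - (Submodule.orthogonalProjection (L (J (seq n)))ᗮ (seq n) : H) :=
    fun n => rfl
  set g : ℕ → H := fun n => (Submodule.orthogonalProjection (L (J (seq n)))ᗮ (seq n) : H) with hg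
  -- Pythagoras
  have pyth : ∀ n, ‖seq n‖^2 = ‖seq (n+1)‖^2 + ‖g n‖^2 := by
    intro n
    have h1 : seq n = seq (n+1) + g n := by rw [hseqS]; abel
    have horth : (inner ℝ (seq (n+1)) (g n) : ℝ) = 0 := by
      have hmem := Submodule.sub_starProjection_mem_orthogonal (K := (L (J (seq n)))ᗮ) (seq n)
      have hgmem : g n ∈ (L (J (seq n)))ᗮ := (Submodule.orthogonalProjection _ (seq n)).2
      have := (Submodule.mem_orthogonal _ _).1 hmem (g n) hgmem
      rw [real_inner_comm] at this
      simpa [hseqS] using this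
    calc ‖seq n‖^2 = ‖seq (n+1) + g n‖^2 := by rw [← h1]
      _ = ‖seq (n+1)‖^2 + 2 * (inner ℝ (seq (n+1)) (g n) : ℝ) + ‖g n‖^2 := norm_add_sq_real _ _
      _ = ‖seq (n+1)‖^2 + ‖g n‖^2 := by rw [horth]; ring
  have hgnorm : ∀ n, (c/2) * ‖seq n‖ ≤ ‖g n‖ := fun n => hJ (seq n)
  set q : ℝ := Real.sqrt (1 - (c/2)^2) with hqdef
  have hcsq : 0 ≤ 1 - (c/2)^2 := by nlinarith
  have hq0 : 0 ≤ q := Real.sqrt_nonneg _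
  have hqsq : q^2 = 1 - (c/2)^2 := Real.sq_sqrt hcsq
  have hqlt : q < 1 := by nlinarith
  have hdecay : ∀ n, ‖seq (n+1)‖ ≤ q * ‖seq n‖ := by
    intro n
    have h2 : ‖seq (n+1)‖^2 ≤ (q * ‖seq n‖)^2 := by
      have h3 := pyth n
      have h4 := hgnorm n
      have h5 : ((c/2) * ‖seq n‖)^2 ≤ ‖g n‖^2 := by
        have : 0 ≤ (c/2) * ‖seq n‖ := by positivity
        nlinarith
      rw [mul_pow, hqsq]
      nlinarith [norm_nonneg (seq n)]
    exact (pow_le_pow_iff_left₀ (norm_nonneg _)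
      (mul_nonneg hq0 (norm_nonneg _)) two_ne_zero).1 h2
  have hbound : ∀ n, ‖seq n‖ ≤ q^n * ‖y‖ := by
    intro n
    induction n with
    | zero => simp [seq]
    | succ n ih =>
      calc ‖seq (n+1)‖ ≤ q * ‖seq n‖ := hdecay n
        _ ≤ q * (q^n * ‖y‖) := by nlinarith
        _ = q^(n+1) * ‖y‖ := by ring
  have hgle : ∀ n, ‖g n‖ ≤ ‖seq n‖ := by
    intro n
    have h3 := pyth n
    nlinarith [norm_nonneg (g n), norm_nonneg (seq n), norm_nonneg (seq (n+1))]
  have hgb : ∀ n, ‖g n‖ ≤ q^n * ‖y‖ := fun n => (hgle n).trans (hbound n)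
  have hsummable : Summable g :=
    Summable.of_norm_bounded ((summable_geometric_of_lt_one hq0 hqlt).mul_right ‖y‖) hgb
  have htel : ∀ n, ∑ k ∈ Finset.range n, g k = y - seq n := by
    intro n
    induction n with
    | zero => simp [seq]
    | succ n ih =>
      rw [Finset.sum_range_succ, ih, hseqS]
      abel
  have hlim : Tendsto seq atTop (𝓝 0) := by
    apply squeeze_zero_norm hbound
    simpa using (tendsto_pow_atTop_nhds_zero_of_lt_one hq0 hqlt).mul_const ‖y‖
  have hsum_y : HasSum g y := by
    have h1 := hsummable.hasSum
    have h2 : Tendsto (fun n => ∑ k ∈ Finset.range n, g k) atTop (𝓝 y) := by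
      simp only [htel]
      simpa using tendsto_const_nhds.sub hlim
    rwa [tendsto_nhds_unique h1.tendsto_sum_nat h2] at h1
  classical
  set h : Fin K → ℕ → H := fun j n => if J (seq n) = j then g n else 0 with hh
  have hsummable_j : ∀ j, Summable (h j) := by
    intro j
    apply Summable.of_norm_bounded
      ((summable_geometric_of_lt_one hq0 hqlt).mul_right ‖y‖)
    intro n
    by_cases hc : J (seq n) = j
    · simpa [hh, hc] using hgb n
    · simp only [hh, hc, if_false, norm_zero]
      positivity
  refine ⟨fun j => ∑' n, h j n, ?_, ?_⟩
  · intro j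
    have hmem : ∀ n, h j n ∈ (L j)ᗮ := by
      intro n
      by_cases hc : J (seq n) = j
      · simpa [hh, hc] using hc ▸ (Submodule.orthogonalProjection _ (seq n)).2
      · simp [hh, hc]
    have htend := (hsummable_j j).hasSum.tendsto_sum_nat
    exact (L j).isClosed_orthogonal.mem_of_tendsto htend
      (Filter.Eventually.of_forall fun n => sum_mem fun k _ => hmem k)
  · rw [← Summable.tsum_finsetSum (fun j _ => hsummable_j j)]
    have : ∀ n, ∑ j, h j n = g n := by
      intro n
      simp [hh, Finset.sum_ite_eq]
    rw [tsum_congr this, hsum_y.tsum_eq]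

theorem rho_eq_zero_of_sum_of_orthocomplements_ne_top
    {H : Type*} [NormedAddCommGroup H] [InnerProductSpace ℝ H] [CompleteSpace H]
    {K : ℕ} (L : Fin K → Submodule ℝ H)
    (hclosed : ∀ k, IsClosed ((L k : Set H)))
    (hsum : ∃ x : H, ¬ ∃ f : Fin K → H, (∀ j, f j ∈ (L j)ᗮ) ∧ x = ∑ j, f j) :
    (⨅ x : {x : H // ‖x‖ = 1},
      sSup {r : ℝ | ∃ g : H, ‖g‖ = 1 ∧ (∃ j, g ∈ (L j)ᗮ) ∧
        r = |(inner ℝ (x : H) g : ℝ)|}) = 0 := by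
  set S : H → Set ℝ := fun x => {r : ℝ | ∃ g : H, ‖g‖ = 1 ∧ (∃ j, g ∈ (L j)ᗮ) ∧
    r = |(inner ℝ x g : ℝ)|} with hS
  have hbdd : ∀ x : H, BddAbove (S x) := by
    intro x
    refine ⟨‖x‖, ?_⟩
    rintro r ⟨g, hg1, -, rfl⟩
    calc |(inner ℝ x g : ℝ)| ≤ ‖x‖ * ‖g‖ := abs_real_inner_le_norm x g
      _ = ‖x‖ := by rw [hg1, mul_one]
  have hnn : ∀ x : H, 0 ≤ sSup (S x) := by
    intro x
    by_cases hne : (S x).Nonempty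
    · obtain ⟨r, hr⟩ := hne
      obtain ⟨g, hg1, hj, hrr⟩ := hr
      have h0 : (0:ℝ) ≤ r := hrr ▸ abs_nonneg _
      exact h0.trans (le_csSup (hbdd x) ⟨g, hg1, hj, hrr⟩)
    · rw [Set.not_nonempty_iff_eq_empty.1 hne, Real.sSup_empty]
  by_contra hne
  set c : ℝ := ⨅ x : {x : H // ‖x‖ = 1}, sSup (S x) with hc
  have hc0 : 0 < c := lt_of_le_of_ne (Real.iInf_nonneg fun x => hnn x) (Ne.symm hne)
  obtain ⟨x₀, hx₀⟩ := hsum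
  have hx0ne : x₀ ≠ 0 := by
    rintro rfl
    exact hx₀ ⟨0, fun j => zero_mem _, by simp⟩
  have hbb : BddBelow (Set.range fun x : {x : H // ‖x‖ = 1} => sSup (S x)) := by
    refine ⟨0, ?_⟩
    rintro _ ⟨x, rfl⟩
    exact hnn x
  have hcle : ∀ (u : H), ‖u‖ = 1 → c ≤ sSup (S u) := fun u hu => ciInf_le hbb ⟨u, hu⟩
  have hSne : ∀ u : H, ‖u‖ = 1 → (S u).Nonempty := by
    intro u hu
    by_contra hemp
    have := hcle u hu
    rw [Set.not_nonempty_iff_eq_empty.1 hemp, Real.sSup_empty] at this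
    linarith
  have hu₀ : ‖(‖x₀‖⁻¹ • x₀)‖ = 1 := by
    rw [norm_smul, norm_inv, norm_norm, inv_mul_cancel₀ (norm_ne_zero_iff.2 hx0ne)]
  have hc1 : c ≤ 1 := by
    refine (hcle _ hu₀).trans (csSup_le (hSne _ hu₀) ?_)
    rintro r ⟨g, hg1, -, rfl⟩
    calc |(inner ℝ (‖x₀‖⁻¹ • x₀) g : ℝ)| ≤ ‖(‖x₀‖⁻¹ • x₀)‖ * ‖g‖ := abs_real_inner_le_norm _ _
      _ = 1 := by rw [hu₀, hg1, mul_one]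
  haveI : Nonempty (Fin K) := by
    obtain ⟨r, g, hg1, ⟨j, hj⟩, hr⟩ := hSne _ hu₀
    exact ⟨j⟩
  have hstep : ∀ z : H, ∃ j, (c/2) * ‖z‖ ≤ ‖(Submodule.orthogonalProjection (L j)ᗮ z : H)‖ := by
    intro z
    by_cases hz : z = 0
    · exact ⟨Classical.arbitrary _, by simp [hz]⟩
    · set u : H := ‖z‖⁻¹ • z with hudef
      have hu : ‖u‖ = 1 := by
        rw [hudef, norm_smul, norm_inv, norm_norm, inv_mul_cancel₀ (norm_ne_zero_iff.2 hz)]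
      obtain ⟨r, ⟨g, hg1, ⟨j, hgj⟩, hr⟩, hlt⟩ :=
        exists_lt_of_lt_csSup (hSne u hu) (show c/2 < sSup (S u) from
          lt_of_lt_of_le (by linarith) (hcle u hu))
      refine ⟨j, ?_⟩
      have hzu : z = ‖z‖ • u := by
        rw [hudef, smul_smul, mul_inv_cancel₀ (norm_ne_zero_iff.2 hz), one_smul]
      have hinner : (inner ℝ z g : ℝ) = ‖z‖ * (inner ℝ u g : ℝ) := by
        conv_lhs => rw [hzu]
        exact real_inner_smul_left _ _ _
      have h1 : (c/2) * ‖z‖ ≤ |(inner ℝ z g : ℝ)| := by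
        rw [hinner, abs_mul, abs_of_nonneg (norm_nonneg z)]
        have := norm_nonneg z
        rw [hr] at hlt
        nlinarith
      refine h1.trans ?_
      have hPz : (inner ℝ z g : ℝ) = inner ℝ ((Submodule.orthogonalProjection (L j)ᗮ z : H)) g := by
        have hmem := Submodule.sub_starProjection_mem_orthogonal (K := (L j)ᗮ) z
        have h0 := (Submodule.mem_orthogonal _ _).1 hmem g hgj
        rw [real_inner_comm] at h0
        have := inner_sub_left (𝕜 := ℝ) z ((Submodule.orthogonalProjection (L j)ᗮ z : H)) g
        rw [show Submodule.starProjection (L j)ᗮ z = ((Submodule.orthogonalProjection (L j)ᗮ z : H)) from rfl] at h0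
        rw [h0] at this
        linarith [this]
      rw [hPz]
      calc |(inner ℝ ((Submodule.orthogonalProjection (L j)ᗮ z : H)) g : ℝ)|
          ≤ ‖(Submodule.orthogonalProjection (L j)ᗮ z : H)‖ * ‖g‖ := abs_real_inner_le_norm _ _
        _ = ‖(Submodule.orthogonalProjection (L j)ᗮ z : H)‖ := by rw [hg1, mul_one]
  exact hx₀ (aux_decomp L hc0 hc1 hstep x₀)
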